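/- Let (x, y) be a bivariate Gaussian random vector with mean (0, 0), unit variances, and correlation ρ ≥ 0, and let t ≥ 0. Then Pr(x > t, y < t) ≥ (1/(2π)) · ((1−ρ)/(1+ρ))^{1/2} · exp(−t²/(1+ρ) − 1). -/

import Mathlib

open MeasureTheory Real

open Set Filter


lemma aux_int (b t : ℝ) (hb : 0 < b) :
    ∫ y in Iio t, (t - y) * Real.exp (-b * (t - y)^2) = (2*b)⁻¹ := by
  rw [← integral_Iic_eq_integral_Iio]
  have hderiv : ∀ y ∈ Iio t, HasDerivAt (fun y : ℝ => (2*b)⁻¹ * Real.exp (-b * (t - y)^2))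
      ((t - y) * Real.exp (-b * (t - y)^2)) y := by
    intro y _
    have h1 : HasDerivAt (fun y : ℝ => t - y) (-1) y := by
      simpa using (hasDerivAt_id y).const_sub t
    have h2 : HasDerivAt (fun y : ℝ => -b * (t - y)^2) (-b * (2 * (t - y) * (-1))) y :=
      ((h1.pow 2).const_mul (-b)).congr_deriv (by ring)
    have h3 := (h2.exp).const_mul ((2*b)⁻¹)
    refine h3.congr_deriv ?_
    have hb0 : b ≠ 0 := hb.ne'
    field_simp
  have hint : IntegrableOn (fun y : ℝ => (t - y) * Real.exp (-b * (t - y)^2)) (Iic t) :=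
    ((integrable_mul_exp_neg_mul_sq hb).comp_sub_left t).integrableOn
  have htend : Tendsto (fun y : ℝ => (2*b)⁻¹ * Real.exp (-b * (t - y)^2)) atBot (nhds 0) := by
    have h1 : Tendsto (fun y : ℝ => t - y) atBot atTop := by
      simpa [sub_eq_add_neg] using tendsto_atTop_add_const_left atBot t tendsto_neg_atBot_atTop
    have h2 : Tendsto (fun z : ℝ => -b * z^2) atTop atBot :=
      (tendsto_const_mul_atBot_of_neg (neg_lt_zero.mpr hb)).mpr (tendsto_pow_atTop two_ne_zero)
    have h3 : Tendsto (fun y : ℝ => Real.exp (-b * (t - y)^2)) atBot (nhds 0) :=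
      Real.tendsto_exp_atBot.comp (h2.comp h1)
    simpa using h3.const_mul ((2*b)⁻¹)
  have hcont : ContinuousWithinAt (fun y : ℝ => (2*b)⁻¹ * Real.exp (-b * (t - y)^2)) (Iic t) t := by
    apply Continuous.continuousWithinAt
    continuity
  have := integral_Iic_of_hasDerivAt_of_tendsto
    (f := fun y : ℝ => (2*b)⁻¹ * Real.exp (-b * (t - y)^2)) (a := t) (m := 0)
    hcont hderiv hint htend
  rw [this]
  simp

set_option maxHeartbeats 2000000 in
/-- Lemma 4.3: lower bound for a bivariate Gaussian probability.
The probability `Pr(x > t, y < t)` for a centered bivariate Gaussian with unit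
variances and correlation `0 ≤ ρ < 1` is written as the integral of the joint
density over the region `{(x, y) | x > t, y < t}`. -/
theorem stmt7 (ρ t : ℝ) (hρ0 : 0 ≤ ρ) (hρ1 : ρ < 1) (ht : 0 ≤ t) :
    (1 / (2 * π)) * Real.sqrt ((1 - ρ) / (1 + ρ))
        * Real.exp (-t ^ 2 / (1 + ρ) - 1)
      ≤ ∫ p : ℝ × ℝ in {p : ℝ × ℝ | t < p.1 ∧ p.2 < t},
          (1 / (2 * π * Real.sqrt (1 - ρ ^ 2))) *
            Real.exp (-(p.1 ^ 2 - 2 * ρ * p.1 * p.2 + p.2 ^ 2)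
              / (2 * (1 - ρ ^ 2))) := by
  have h1p : (0:ℝ) < 1 + ρ := by linarith
  have h1m : (0:ℝ) < 1 - ρ := by linarith
  have hs : (0:ℝ) < 1 - ρ^2 := by nlinarith
  have hπ : (0:ℝ) < π := Real.pi_pos
  have hsq : (0:ℝ) < Real.sqrt (1 - ρ^2) := Real.sqrt_pos.mpr hs
  set C : ℝ := 1 / (2 * π * Real.sqrt (1 - ρ^2)) with hCdef
  have hC : 0 < C := by positivity
  set g : ℝ × ℝ → ℝ := fun p =>
    C * Real.exp (-(p.1^2 - 2*ρ*p.1*p.2 + p.2^2) / (2*(1-ρ^2))) with hgdef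
  have hg_nonneg : ∀ p, 0 ≤ g p := fun p => by positivity
  have hg_cont : Continuous g := by
    apply continuous_const.mul
    apply Real.continuous_exp.comp
    fun_prop
  -- global integrability of the density
  have hg_int : Integrable g := by
    have hc : (0:ℝ) < 1/(2*(1+ρ)) := by positivity
    have hbd : Integrable (fun p : ℝ × ℝ =>
        C * (Real.exp (-(1/(2*(1+ρ))) * p.1^2) * Real.exp (-(1/(2*(1+ρ))) * p.2^2))) := by
      exact ((integrable_exp_neg_mul_sq hc).mul_prod (integrable_exp_neg_mul_sq hc)).const_mul C
    apply hbd.mono' hg_cont.aestronglyMeasurable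
    filter_upwards with p
    rw [Real.norm_of_nonneg (hg_nonneg p)]
    have key : (p.1^2 + p.2^2) * (1-ρ) ≤ p.1^2 - 2*ρ*p.1*p.2 + p.2^2 := by
      nlinarith [mul_nonneg hρ0 (sq_nonneg (p.1 - p.2))]
    have harg : -(p.1^2 - 2*ρ*p.1*p.2 + p.2^2) / (2*(1-ρ^2))
        ≤ -(1/(2*(1+ρ))) * p.1^2 + -(1/(2*(1+ρ))) * p.2^2 := by
      rw [div_le_iff₀ (by positivity : (0:ℝ) < 2*(1-ρ^2))]
      have expand : (-(1/(2*(1+ρ))) * p.1^2 + -(1/(2*(1+ρ))) * p.2^2) * (2*(1-ρ^2))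
          = -((p.1^2+p.2^2) * (1-ρ)) := by
        field_simp
        ring
      rw [expand]
      linarith
    calc g p = C * Real.exp (-(p.1^2 - 2*ρ*p.1*p.2 + p.2^2) / (2*(1-ρ^2))) := rfl
      _ ≤ C * (Real.exp (-(1/(2*(1+ρ))) * p.1^2) * Real.exp (-(1/(2*(1+ρ))) * p.2^2)) := by
          rw [← Real.exp_add]
          exact mul_le_mul_of_nonneg_left (Real.exp_le_exp.mpr harg) hC.le
  -- the smaller region S
  set S : Set (ℝ × ℝ) := {p : ℝ × ℝ | t < p.1 ∧ p.1 < 2*t - p.2} with hSdef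
  have hSmeas : MeasurableSet S :=
    (measurableSet_lt measurable_const measurable_fst).inter
      (measurableSet_lt measurable_fst (measurable_const.sub measurable_snd))
  have hsub : S ⊆ {p : ℝ × ℝ | t < p.1 ∧ p.2 < t} := by
    rintro p ⟨h1, h2⟩
    exact ⟨h1, by linarith⟩
  have step1 : ∫ p in S, g p ≤ ∫ p in {p : ℝ × ℝ | t < p.1 ∧ p.2 < t}, g p :=
    setIntegral_mono_set hg_int.integrableOn (Eventually.of_forall hg_nonneg)
      (HasSubset.Subset.eventuallyLE hsub)
  -- Fubini
  have hind_int : Integrable (S.indicator g) := hg_int.indicator hSmeas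
  have hind_int' : Integrable (S.indicator g) ((volume : Measure ℝ).prod volume) := hind_int
  have step2 : ∫ p in S, g p = ∫ y : ℝ, ∫ x : ℝ, S.indicator g (x, y) := by
    rw [← integral_indicator hSmeas]
    exact integral_prod_symm _ hind_int'
  set b : ℝ := 1/(1-ρ) with hbdef
  have hb : 0 < b := by positivity
  set K : ℝ := C * Real.exp (-t^2/(1+ρ)) with hKdef
  have hK : 0 < K := by positivity
  -- pointwise lower bound for the inner integral, for y < t
  have inner_bd : ∀ y ∈ Iio t,
      K * ((t - y) * Real.exp (-b * (t - y)^2)) ≤ ∫ x : ℝ, S.indicator g (x, y) := by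
    intro y hy
    have hyt : y < t := hy
    have heq : ∫ x : ℝ, S.indicator g (x, y)
        = ∫ x in Ioo t (2*t - y), g (x, y) := by
      rw [← integral_indicator measurableSet_Ioo]
      congr 1
    rw [heq]
    have hintOn : IntegrableOn (fun x => g (x, y)) (Ioo t (2*t - y)) := by
      have hcx : Continuous fun x : ℝ => g (x, y) :=
        hg_cont.comp (continuous_id.prodMk continuous_const)
      exact (hcx.integrableOn_Icc).mono_set Ioo_subset_Icc_self
    have hpt : ∀ x ∈ Ioo t (2*t - y),
        C * Real.exp (-(t^2/(1+ρ) + b * (t-y)^2)) ≤ g (x, y) := by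
      rintro x ⟨hx1, hx2⟩
      have hB : 0 ≤ x - ρ*y := by
        rcases le_or_gt 0 y with h | h
        · nlinarith
        · nlinarith
      have main : x^2 - 2*ρ*x*y + y^2 ≤ 2*(1-ρ)*t^2 + 2*(1+ρ)*(t-y)^2 := by
        nlinarith [mul_nonneg (show (0:ℝ) ≤ 2*t - y - x by linarith)
          (show (0:ℝ) ≤ (2*t - (1+ρ)*y) + (x - ρ*y) by nlinarith)]
      have hdiv : (x^2 - 2*ρ*x*y + y^2) / (2*(1-ρ^2)) ≤ t^2/(1+ρ) + b * (t-y)^2 := by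
        rw [div_le_iff₀ (by positivity : (0:ℝ) < 2*(1-ρ^2))]
        have expand : (t^2/(1+ρ) + b * (t-y)^2) * (2*(1-ρ^2))
            = 2*(1-ρ)*t^2 + 2*(1+ρ)*(t-y)^2 := by
          rw [hbdef]
          field_simp
          ring
        rw [expand]
        exact main
      have : Real.exp (-(t^2/(1+ρ) + b * (t-y)^2))
          ≤ Real.exp (-(x^2 - 2*ρ*x*y + y^2) / (2*(1-ρ^2))) := by
        apply Real.exp_le_exp.mpr
        rw [neg_div]
        linarith
      calc C * Real.exp (-(t^2/(1+ρ) + b * (t-y)^2))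
          ≤ C * Real.exp (-(x^2 - 2*ρ*x*y + y^2) / (2*(1-ρ^2))) :=
            mul_le_mul_of_nonneg_left this hC.le
        _ = g (x, y) := rfl
    have hvol : (volume (Ioo t (2*t - y))).toReal = t - y := by
      rw [Real.volume_Ioo, ENNReal.toReal_ofReal (by linarith)]
      ring
    have := setIntegral_ge_of_const_le_real (μ := volume) measurableSet_Ioo
      (by rw [Real.volume_Ioo]; exact ENNReal.ofReal_ne_top) hpt hintOn
    rw [measureReal_def, hvol] at this
    calc K * ((t - y) * Real.exp (-b * (t - y)^2))
        = C * Real.exp (-(t^2/(1+ρ) + b * (t-y)^2)) * (t - y) := by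
          rw [hKdef, neg_add, Real.exp_add]
          ring_nf
      _ ≤ ∫ x in Ioo t (2*t - y), g (x, y) := this
  -- integrate the lower bound in y
  have F1 : Integrable (fun y : ℝ => ∫ x : ℝ, S.indicator g (x, y)) :=
    hind_int'.integral_prod_right
  have hH_int : Integrable (fun y : ℝ => K * ((t - y) * Real.exp (-b * (t - y)^2))) :=
    ((integrable_mul_exp_neg_mul_sq hb).comp_sub_left t).const_mul K
  have inner_nonneg : ∀ y : ℝ, 0 ≤ ∫ x : ℝ, S.indicator g (x, y) := fun y =>
    integral_nonneg fun x => Set.indicator_apply_nonneg fun _ => hg_nonneg _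
  have c1 : ∫ y in Iio t, K * ((t - y) * Real.exp (-b * (t - y)^2))
      ≤ ∫ y in Iio t, ∫ x : ℝ, S.indicator g (x, y) :=
    setIntegral_mono_on hH_int.integrableOn F1.integrableOn measurableSet_Iio inner_bd
  have c2 : ∫ y in Iio t, (∫ x : ℝ, S.indicator g (x, y))
      ≤ ∫ y : ℝ, ∫ x : ℝ, S.indicator g (x, y) :=
    setIntegral_le_integral F1 (Eventually.of_forall inner_nonneg)
  have c3 : ∫ y in Iio t, K * ((t - y) * Real.exp (-b * (t - y)^2)) = K * (2*b)⁻¹ := by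
    rw [integral_const_mul, aux_int b t hb]
  -- final numeric comparison
  have he : (2:ℝ) ≤ Real.exp 1 := by
    have := Real.add_one_le_exp 1
    linarith
  have hSvalue : Real.sqrt ((1 - ρ) / (1 + ρ)) = (1 - ρ) / Real.sqrt (1 - ρ^2) := by
    rw [eq_div_iff (ne_of_gt hsq), ← Real.sqrt_mul (by positivity : (0:ℝ) ≤ (1-ρ)/(1+ρ)),
      show (1-ρ)/(1+ρ) * (1-ρ^2) = (1-ρ)^2 by field_simp; ring,
      Real.sqrt_sq h1m.le]
  have final : (1 / (2 * π)) * Real.sqrt ((1 - ρ) / (1 + ρ)) * Real.exp (-t ^ 2 / (1 + ρ) - 1)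
      ≤ K * (2*b)⁻¹ := by
    rw [hSvalue, hKdef, hbdef, Real.exp_sub]
    have hb2 : (2 * (1/(1-ρ)))⁻¹ = (1-ρ)/2 := by
      field_simp
    rw [hb2]
    have hE : 0 < Real.exp (-t^2/(1+ρ)) := Real.exp_pos _
    have lhs_eq : (1 / (2 * π)) * ((1 - ρ) / Real.sqrt (1 - ρ^2))
          * (Real.exp (-t ^ 2 / (1 + ρ)) / Real.exp 1)
        = (Real.exp (-t^2/(1+ρ)) * (1-ρ) / (2 * π * Real.sqrt (1 - ρ^2))) * (Real.exp 1)⁻¹ := by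
      field_simp
    have rhs_eq : C * Real.exp (-t^2/(1+ρ)) * ((1-ρ)/2)
        = (Real.exp (-t^2/(1+ρ)) * (1-ρ) / (2 * π * Real.sqrt (1 - ρ^2))) * (1/2) := by
      rw [hCdef]
      field_simp
      try ring
    rw [lhs_eq, rhs_eq]
    have hinv : (Real.exp 1)⁻¹ ≤ 1/2 := by
      rw [inv_eq_one_div]
      exact one_div_le_one_div_of_le (by norm_num) he
    exact mul_le_mul_of_nonneg_left hinv (by positivity)
  calc (1 / (2 * π)) * Real.sqrt ((1 - ρ) / (1 + ρ)) * Real.exp (-t ^ 2 / (1 + ρ) - 1)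
      ≤ K * (2*b)⁻¹ := final
    _ = ∫ y in Iio t, K * ((t - y) * Real.exp (-b * (t - y)^2)) := c3.symm
    _ ≤ ∫ y in Iio t, ∫ x : ℝ, S.indicator g (x, y) := c1
    _ ≤ ∫ y : ℝ, ∫ x : ℝ, S.indicator g (x, y) := c2
    _ = ∫ p in S, g p := step2.symm
    _ ≤ ∫ p in {p : ℝ × ℝ | t < p.1 ∧ p.2 < t}, g p := step1
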